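/- For any α ≥ 1 and n ≥ 2, if FFD is monotone with respect to α and n, then FFD is weakly monotone with respect to α and n. -/

import Mathlib

open scoped Classical

noncomputable section

variable {C : Type*} [LinearOrder C]

/-- Total cost of a bundle of chores: the sum of the chore costs. -/
def bundleCost (v : C → ℝ) (B : Finset C) : ℝ := ∑ c ∈ B, v c

/-- The universal ordering is the ambient linear order on `C`, along which costs are
non-increasing; hence the `p`-th largest chore `B[p]` of a bundle `B` (ties broken by the
universal ordering) is the `p`-th element of `B` sorted along the order.
`nthCost v B p` is `v (B[p])` (1-indexed), with the convention `0` for `p > |B|`. -/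
def nthCost (v : C → ℝ) (B : Finset C) (p : ℕ) : ℝ :=
  ((B.sort (· ≤ ·)).map v).getD (p - 1) 0

/-- `B1 =lex B2` : equal cost at each position. -/
def lexEq (v : C → ℝ) (B1 B2 : Finset C) : Prop :=
  ∀ p : ℕ, nthCost v B1 p = nthCost v B2 p

/-- `B1 ≤lex B2`. -/
def lexLe (v : C → ℝ) (B1 B2 : Finset C) : Prop :=
  lexEq v B1 B2 ∨
    ∃ q : ℕ, nthCost v B1 q < nthCost v B2 q ∧ ∀ p < q, nthCost v B1 p = nthCost v B2 p

/-- `B1 <lex B2`. -/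
def lexLt (v : C → ℝ) (B1 B2 : Finset C) : Prop :=
  lexLe v B1 B2 ∧ ¬ lexEq v B1 B2

/-- `(M, v)` is a chore instance for the universal ordering given by the linear order on `C`:
all costs are nonnegative and non-increasing along the ordering. -/
def ChoreOrdered (M : Finset C) (v : C → ℝ) : Prop :=
  (∀ c ∈ M, 0 ≤ v c) ∧ ∀ c ∈ M, ∀ c' ∈ M, c ≤ c' → v c' ≤ v c

/-- `P` is a partition of `M` into `n` (possibly empty) bundles. -/
def IsPartition (M : Finset C) {n : ℕ} (P : Fin n → Finset C) : Prop :=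
  (∀ i, P i ⊆ M) ∧ (∀ i j, i ≠ j → Disjoint (P i) (P j)) ∧ ∀ c ∈ M, ∃ i, c ∈ P i

/-- The maximin share: the minimum over partitions of `M` into `n` bundles of the
maximum bundle cost. -/
def MMS (M : Finset C) (v : C → ℝ) (n : ℕ) : ℝ :=
  sInf {x : ℝ | ∃ P : Fin n → Finset C, IsPartition M P ∧ ∀ i, bundleCost v (P i) ≤ x}

/-- One pass of first-fit: scan the chores in the given list order, adding a chore whenever
the bundle cost stays at most `τ`. -/
def ffdFill (v : C → ℝ) (τ : ℝ) : List C → Finset C → Finset C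
  | [], B => B
  | c :: rest, B =>
      if bundleCost v (insert c B) ≤ τ then ffdFill v τ rest (insert c B)
      else ffdFill v τ rest B

/-- The bundle FFD builds from the remaining chores `R` (scanned from largest to smallest,
i.e. along the linear order on `C`). -/
def ffdBundle (v : C → ℝ) (τ : ℝ) (R : Finset C) : Finset C :=
  ffdFill v τ (R.sort (· ≤ ·)) ∅

/-- The chores remaining after FFD has filled `k` bundles. -/
def ffdRem (M : Finset C) (v : C → ℝ) (τ : ℝ) : ℕ → Finset C
  | 0 => M
  | k + 1 => ffdRem M v τ k \ ffdBundle v τ (ffdRem M v τ k)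

/-- The `(k+1)`-st bundle (0-indexed `k`) output by FFD. -/
def FFDBundle (M : Finset C) (v : C → ℝ) (τ : ℝ) (k : ℕ) : Finset C :=
  ffdBundle v τ (ffdRem M v τ k)

/-- `FFD(M, v, τ, n)` allocates all chores. -/
def FFDAllocatesAll (M : Finset C) (v : C → ℝ) (τ : ℝ) (n : ℕ) : Prop :=
  ffdRem M v τ n = ∅

/-- The union `A_1 ∪ ⋯ ∪ A_{k-1}` of the bundles preceding the `k`-th one (0-indexed). -/
def priorUnion {n : ℕ} (A : Fin n → Finset C) (k : Fin n) : Finset C :=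
  (Finset.univ.filter fun j : Fin n => j < k).biUnion A

/-- `B` is a `k`-th benchmark bundle of the collection `A`: a lexicographically maximal
subset of `M \ (A_1 ∪ ⋯ ∪ A_{k-1})` among subsets of cost at most `τ`. -/
def IsBenchmark (M : Finset C) (v : C → ℝ) (τ : ℝ) {n : ℕ}
    (A : Fin n → Finset C) (k : Fin n) (B : Finset C) : Prop :=
  B ⊆ M \ priorUnion A k ∧ bundleCost v B ≤ τ ∧
    ∀ B' ⊆ M \ priorUnion A k, bundleCost v B' ≤ τ → lexLe v B' B

/-- The tuple `(M, A, v, τ)` is First Fit Valid: `A` consists of pairwise disjoint bundles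
in `M`, `τ ≥ MMS(M, v, n)`, and each `A_k` is lexicographically at least the `k`-th
benchmark bundle. -/
def FirstFitValid (M : Finset C) {n : ℕ} (A : Fin n → Finset C) (v : C → ℝ) (τ : ℝ) : Prop :=
  (∀ k, A k ⊆ M) ∧ (∀ i j, i ≠ j → Disjoint (A i) (A j)) ∧ MMS M v n ≤ τ ∧
    ∀ (k : Fin n) (B : Finset C), IsBenchmark M v τ A k B → lexLe v B (A k)

/-- `c` is the last chore `B[|B|]` of the bundle `B`. -/
def IsLastChore (B : Finset C) (c : C) : Prop := c ∈ B ∧ ∀ c' ∈ B, c' ≤ c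

/-- The fit-in space `fs` of a bundle: `τ` minus the cost of the bundle without its
last chore. -/
def fitSpace (v : C → ℝ) (τ : ℝ) (B : Finset C) : ℝ :=
  if h : B.Nonempty then τ - bundleCost v (B.erase (B.max' h)) else τ

/-- The chore `c = B[p]` of `B` is `x`-redundant: the cost of `{B[1], …, B[p-1]}`
is at least `x`. -/
def Redundant (v : C → ℝ) (x : ℝ) (B : Finset C) (c : C) : Prop :=
  c ∈ B ∧ x ≤ bundleCost v (B.filter fun c' => c' < c)

/-- `A` dominates `B`: there is `f : B → A` with `v(f⁻¹(c')) ≤ v(c')` for every `c' ∈ A`. -/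
def Dominates (v : C → ℝ) (A B : Finset C) : Prop :=
  ∃ f : C → C, (∀ c ∈ B, f c ∈ A) ∧
    ∀ c' ∈ A, bundleCost v (B.filter fun c => f c = c') ≤ v c'

/-- `cnew` is a suitable reduced chore for `cstar` (the excessive chore of `A_k`):
`v(cnew) < v(cstar)` and, running FFD on `M' = (M \ {cstar}) ∪ {cnew}`, the union of the
first `k` output bundles equals `((A_1 ∪ ⋯ ∪ A_k) \ {cstar}) ∪ {cnew}`. -/
def SuitableReduced (M : Finset C) (v : C → ℝ) (τ : ℝ) {n : ℕ}
    (A : Fin n → Finset C) (k : Fin n) (cstar cnew : C) : Prop :=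
  v cnew < v cstar ∧
    (Finset.univ.filter fun j : Fin n => j ≤ k).biUnion
        (fun j => FFDBundle (insert cnew (M.erase cstar)) v τ j.val) =
      insert cnew (((Finset.univ.filter fun j : Fin n => j ≤ k).biUnion A).erase cstar)

/-- The Tidy-Up conditions on the tuple `(M, A, v, τ)`. -/
def TidyUp (M : Finset C) {n : ℕ} (A : Fin n → Finset C) (v : C → ℝ) (τ : ℝ) : Prop :=
  FirstFitValid M A v τ ∧
  (∃ cstar, M \ Finset.univ.biUnion A = {cstar} ∧ ∀ c ∈ M, v cstar ≤ v c) ∧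
  (∀ k, ∀ c ∈ A k, ¬ Redundant v (MMS M v n) (A k) c) ∧
  (∀ c ∈ M, τ - MMS M v n < v c) ∧
  (∀ k, 2 ≤ (A k).card ∧ nthCost v (A k) 1 + nthCost v (A k) 2 < MMS M v n) ∧
  (∃ P : Fin n → Finset C, IsPartition M P ∧
    (∀ j, bundleCost v (P j) ≤ MMS M v n ∧ 3 ≤ (P j).card) ∧
    ∀ k j, ¬ Dominates v (A k) (P j))

/-- One pass of HFFD's first-fit with remaining agents `T`: a chore is added iff some
remaining agent accepts the enlarged bundle. -/
def hffdFill {n : ℕ} (v : Fin n → C → ℝ) (h : Fin n → ℝ) (T : Finset (Fin n)) :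
    List C → Finset C → Finset C
  | [], B => B
  | c :: rest, B =>
      if ∃ i ∈ T, bundleCost (v i) (insert c B) ≤ h i then
        hffdFill v h T rest (insert c B)
      else hffdFill v h T rest B

/-- `(A, assign)` is a run of HFFD on the instance `(M, v)` with thresholds `h`:
bundle `A_k` is built by first-fit over the remaining chores using the remaining agents,
and is assigned to the remaining agent `assign k`, who accepts it. -/
def IsHFFDRun {n : ℕ} (M : Finset C) (v : Fin n → C → ℝ) (h : Fin n → ℝ)
    (A : Fin n → Finset C) (assign : Fin n → Fin n) : Prop :=
  Function.Injective assign ∧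
    ∀ k : Fin n,
      A k = hffdFill v h
          (Finset.univ \ (Finset.univ.filter fun j : Fin n => j < k).image assign)
          ((M \ priorUnion A k).sort (· ≤ ·)) ∅ ∧
      bundleCost (v (assign k)) (A k) ≤ h (assign k)


/-- FFD is monotone with respect to `α` and `n`. -/
def MonotoneFFD (C : Type*) [LinearOrder C] (α : ℝ) (n : ℕ) : Prop :=
  ∀ (M : Finset C) (v : C → ℝ), ChoreOrdered M v →
    FFDAllocatesAll M v (α * MMS M v n) n →
    ∀ A : Fin n → Finset C, FirstFitValid M A v (α * MMS M v n) →
      Finset.univ.biUnion A = M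

/-- FFD is weakly monotone with respect to `α` and `n`. -/
def WeaklyMonotoneFFD (C : Type*) [LinearOrder C] (α : ℝ) (n : ℕ) : Prop :=
  ∀ (M : Finset C) (v : C → ℝ), ChoreOrdered M v →
    FFDAllocatesAll M v (α * MMS M v n) n →
    ∀ β : ℝ, α ≤ β → FFDAllocatesAll M v (β * MMS M v n) n

-- AUX LEMMAS --
set_option linter.unusedSectionVars false

lemma bundleCost_nonneg {v : C → ℝ} {B : Finset C} (h : ∀ c ∈ B, 0 ≤ v c) :
    0 ≤ bundleCost v B := Finset.sum_nonneg h

lemma bundleCost_insert {v : C → ℝ} {c : C} {B : Finset C} (h : c ∉ B) :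
    bundleCost v (insert c B) = v c + bundleCost v B := Finset.sum_insert h

lemma nthCost_zero (v : C → ℝ) (B : Finset C) : nthCost v B 0 = nthCost v B 1 := rfl

lemma nthCost_insert_one {v : C → ℝ} {c : C} {X : Finset C} (hc : ∀ x ∈ X, c < x) :
    nthCost v (insert c X) 1 = v c := by
  have hnot : c ∉ X := fun hm => lt_irrefl c (hc c hm)
  unfold nthCost
  rw [Finset.sort_insert _ (fun b hb => (hc b hb).le) hnot]
  simp

lemma nthCost_insert_succ {v : C → ℝ} {c : C} {X : Finset C} (hc : ∀ x ∈ X, c < x)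
    (p : ℕ) (hp : 1 ≤ p) :
    nthCost v (insert c X) (p + 1) = nthCost v X p := by
  have hnot : c ∉ X := fun hm => lt_irrefl c (hc c hm)
  unfold nthCost
  rw [Finset.sort_insert _ (fun b hb => (hc b hb).le) hnot]
  cases p with
  | zero => omega
  | succ q => simp

lemma nthCost_nonneg {v : C → ℝ} {B : Finset C} (h : ∀ c ∈ B, 0 ≤ v c) (p : ℕ) :
    0 ≤ nthCost v B p := by
  unfold nthCost
  rcases lt_or_ge (p - 1) ((B.sort (· ≤ ·)).map v).length with hl | hl
  · rw [List.getD_eq_getElem _ _ hl]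
    have hll : p - 1 < (B.sort (· ≤ ·)).length := by simpa using hl
    rw [List.getElem_map]
    exact h _ ((Finset.mem_sort _).1 (List.getElem_mem hll))
  · rw [List.getD_eq_default _ _ hl]

lemma lexLe_of_forall_le {v : C → ℝ} {B G : Finset C}
    (h : ∀ p, nthCost v B p ≤ nthCost v G p) : lexLe v B G := by
  by_cases he : lexEq v B G
  · exact Or.inl he
  · have hex : ∃ p, nthCost v B p ≠ nthCost v G p := by
      by_contra hc
      push_neg at hc
      exact he hc
    right
    refine ⟨Nat.find hex, lt_of_le_of_ne (h _) (Nat.find_spec hex), fun p hp => ?_⟩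
    by_contra hne
    exact Nat.find_min hex hp hne

lemma lexLe_insert {v : C → ℝ} {c c' : C} {B G : Finset C} (hv : v c = v c')
    (hcB : ∀ x ∈ B, c < x) (hcG : ∀ x ∈ G, c' < x) (h : lexLe v B G) :
    lexLe v (insert c B) (insert c' G) := by
  have e1 : nthCost v (insert c B) 1 = v c := nthCost_insert_one hcB
  have e1' : nthCost v (insert c' G) 1 = v c' := nthCost_insert_one hcG
  have es : ∀ p, 1 ≤ p → nthCost v (insert c B) (p + 1) = nthCost v B p :=
    nthCost_insert_succ hcB
  have es' : ∀ p, 1 ≤ p → nthCost v (insert c' G) (p + 1) = nthCost v G p :=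
    nthCost_insert_succ hcG
  have head : ∀ p ≤ 1, nthCost v (insert c B) p = nthCost v (insert c' G) p := by
    intro p hp
    interval_cases p
    · rw [nthCost_zero, nthCost_zero, e1, e1', hv]
    · rw [e1, e1', hv]
  rcases h with he | ⟨q, hlt, hpre⟩
  · left
    intro p
    match p with
    | 0 => exact head 0 (by omega)
    | 1 => exact head 1 (by omega)
    | (r + 2) => rw [es (r+1) (by omega), es' (r+1) (by omega)]; exact he (r+1)
  · right
    match q with
    | 0 =>
        refine ⟨2, ?_, fun p hp => head p (by omega)⟩
        rw [es 1 le_rfl, es' 1 le_rfl, ← nthCost_zero, ← nthCost_zero]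
        exact hlt
    | (r + 1) =>
        refine ⟨r + 2, ?_, fun p hp => ?_⟩
        · rw [es (r+1) (by omega), es' (r+1) (by omega)]; exact hlt
        · match p with
          | 0 => exact head 0 (by omega)
          | 1 => exact head 1 (by omega)
          | (s + 2) =>
              rw [es (s+1) (by omega), es' (s+1) (by omega)]
              exact hpre (s+1) (by omega)

lemma nthCost_empty (v : C → ℝ) (p : ℕ) : nthCost v (∅ : Finset C) p = 0 := by simp [nthCost]

lemma min'_lt_erase {B : Finset C} (hB : B.Nonempty) :
    ∀ x ∈ B.erase (B.min' hB), B.min' hB < x := fun x hx =>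
  lt_of_le_of_ne (B.min'_le x (Finset.mem_of_mem_erase hx))
    (Ne.symm (Finset.ne_of_mem_erase hx))

lemma ffdFill_subset (v : C → ℝ) (τ : ℝ) :
    ∀ (l : List C) (B : Finset C), ffdFill v τ l B ⊆ B ∪ l.toFinset := by
  intro l
  induction l with
  | nil => intro B; simp [ffdFill]
  | cons c rest ih =>
      intro B
      simp only [ffdFill]
      split
      · refine (ih (insert c B)).trans ?_
        intro x hx
        simp only [Finset.mem_union, Finset.mem_insert, List.toFinset_cons] at hx ⊢
        tauto
      · refine (ih B).trans ?_
        intro x hx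
        simp only [Finset.mem_union, Finset.mem_insert, List.toFinset_cons] at hx ⊢
        tauto

lemma ffdFill_insert_factor (v : C → ℝ) (c : C) :
    ∀ (l : List C) (τ : ℝ) (B : Finset C), c ∉ B → (∀ x ∈ l, x ≠ c) →
      ffdFill v τ l (insert c B) = insert c (ffdFill v (τ - v c) l B) := by
  intro l
  induction l with
  | nil => intro τ B _ _; rfl
  | cons x rest ih =>
      intro τ B hcB hl
      have hxc : x ≠ c := hl x (by simp)
      have hcxB : c ∉ insert x B := by
        simp only [Finset.mem_insert]
        push_neg
        exact ⟨fun h => hxc h.symm, hcB⟩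
      have hcomm : insert x (insert c B) = insert c (insert x B) := Finset.insert_comm x c B
      have hiff : bundleCost v (insert x (insert c B)) ≤ τ ↔
          bundleCost v (insert x B) ≤ τ - v c := by
        rw [hcomm, bundleCost_insert hcxB]
        constructor <;> intro <;> linarith
      simp only [ffdFill]
      by_cases hfit : bundleCost v (insert x B) ≤ τ - v c
      · rw [if_pos (hiff.2 hfit), if_pos hfit, hcomm]
        exact ih τ (insert x B) hcxB (fun y hy => hl y (by simp [hy]))
      · rw [if_neg (fun h => hfit (hiff.1 h)), if_neg hfit]
        exact ih τ B hcB (fun y hy => hl y (by simp [hy]))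

lemma greedy_lexLe (v : C → ℝ) :
    ∀ (l : List C), l.Pairwise (· < ·) → (∀ x ∈ l, 0 ≤ v x) →
      (∀ a ∈ l, ∀ b ∈ l, a ≤ b → v b ≤ v a) →
      ∀ (τ : ℝ) (B : Finset C), (∀ x ∈ B, x ∈ l) → bundleCost v B ≤ τ →
      lexLe v B (ffdFill v τ l ∅) := by
  intro l
  induction l with
  | nil =>
      intro _ _ _ τ B hB _
      have : B = ∅ := Finset.eq_empty_of_forall_notMem (fun x hx => by simpa using hB x hx)
      subst this
      exact Or.inl fun p => rfl
  | cons c rest ih =>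
      intro hsort hnn hmono τ B hB hcost
      have hlt : ∀ x ∈ rest, c < x := fun x hx => (List.pairwise_cons.1 hsort).1 x hx
      have hsort' : rest.Pairwise (· < ·) := (List.pairwise_cons.1 hsort).2
      have hnn' : ∀ x ∈ rest, 0 ≤ v x := fun x hx => hnn x (by simp [hx])
      have hmono' : ∀ a ∈ rest, ∀ b ∈ rest, a ≤ b → v b ≤ v a := fun a ha b hb hab =>
        hmono a (by simp [ha]) b (by simp [hb]) hab
      have hBnn : ∀ x ∈ B, 0 ≤ v x := fun x hx => hnn x (hB x hx)
      have hcost1 : bundleCost v (insert c (∅ : Finset C)) = v c := by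
        simp [bundleCost]
      simp only [ffdFill, hcost1]
      by_cases hcτ : v c ≤ τ
      · rw [if_pos hcτ]
        have hfac : ffdFill v τ rest (insert c ∅) =
            insert c (ffdFill v (τ - v c) rest ∅) :=
          ffdFill_insert_factor v c rest τ ∅ (by simp) (fun x hx => (hlt x hx).ne')
        rw [hfac]
        set G₂ := ffdFill v (τ - v c) rest ∅ with hG₂def
        have hG₂l : ∀ x ∈ G₂, x ∈ rest := by
          intro x hx
          have := ffdFill_subset v (τ - v c) rest ∅ hx
          simpa using this
        have hG₂ : ∀ x ∈ G₂, c < x := fun x hx => hlt x (hG₂l x hx)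
        by_cases hcB : c ∈ B
        · set B' := B.erase c with hB'def
          have hB'rest : ∀ x ∈ B', x ∈ rest := by
            intro x hx
            have hxB := hB x (Finset.mem_of_mem_erase hx)
            simp only [List.mem_cons] at hxB
            rcases hxB with h1 | h1
            · exact absurd h1 (Finset.ne_of_mem_erase hx)
            · exact h1
          have hsum : v c + bundleCost v B' = bundleCost v B := by
            rw [hB'def]
            exact Finset.add_sum_erase _ _ hcB
          have hcost' : bundleCost v B' ≤ τ - v c := by linarith
          have hIH := ih hsort' hnn' hmono' (τ - v c) B' hB'rest hcost'
          have := lexLe_insert (rfl : v c = v c)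
            (fun x hx => hlt x (hB'rest x hx)) hG₂ hIH
          rwa [hB'def, Finset.insert_erase hcB] at this
        · have hBrest : ∀ x ∈ B, x ∈ rest := by
            intro x hx
            have hxB := hB x hx
            simp only [List.mem_cons] at hxB
            rcases hxB with h1 | h1
            · exact absurd (h1 ▸ hx) hcB
            · exact h1
          rcases B.eq_empty_or_nonempty with hBe | hBne
          · subst hBe
            refine lexLe_of_forall_le (fun p => ?_)
            rw [nthCost_empty]
            exact nthCost_nonneg (fun x hx => by
              rcases Finset.mem_insert.1 hx with h1 | h1
              · subst h1; exact hnn x (by simp)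
              · exact hnn' x (hG₂l x h1)) p
          · set b1 := B.min' hBne with hb1def
            have hb1B : b1 ∈ B := B.min'_mem hBne
            have hb1rest : b1 ∈ rest := hBrest b1 hb1B
            have hvb : v b1 ≤ v c :=
              hmono c (by simp) b1 (by simp [hb1rest]) (hlt b1 hb1rest).le
            have hBsplit : insert b1 (B.erase b1) = B := Finset.insert_erase hb1B
            have hBh : nthCost v B 1 = v b1 := by
              rw [← hBsplit]
              exact nthCost_insert_one (min'_lt_erase hBne)
            rcases eq_or_lt_of_le hvb with heq | hstrict
            · set B' := B.erase b1 with hB'def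
              have hB'rest : ∀ x ∈ B', x ∈ rest := fun x hx =>
                hBrest x (Finset.mem_of_mem_erase hx)
              have hsum : v b1 + bundleCost v B' = bundleCost v B :=
                Finset.add_sum_erase _ _ hb1B
              have hcost' : bundleCost v B' ≤ τ - v c := by
                rw [← heq]; linarith
              have hIH := ih hsort' hnn' hmono' (τ - v c) B' hB'rest hcost'
              have := lexLe_insert heq (min'_lt_erase hBne) hG₂ hIH
              rwa [hBsplit] at this
            · refine Or.inr ⟨0, ?_, fun p hp => absurd hp (Nat.not_lt_zero p)⟩
              rw [nthCost_zero, nthCost_zero, hBh, nthCost_insert_one hG₂]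
              exact hstrict
      · rw [if_neg hcτ]
        have hcB : c ∉ B := by
          intro hcB
          have : v c ≤ bundleCost v B := Finset.single_le_sum hBnn hcB
          linarith
        have hBrest : ∀ x ∈ B, x ∈ rest := by
          intro x hx
          have hxB := hB x hx
          simp only [List.mem_cons] at hxB
          rcases hxB with h1 | h1
          · exact absurd (h1 ▸ hx) hcB
          · exact h1
        exact ih hsort' hnn' hmono' τ B hBrest hcost

lemma ffdBundle_subset (v : C → ℝ) (τ : ℝ) (R : Finset C) : ffdBundle v τ R ⊆ R := by
  intro x hx
  have := ffdFill_subset v τ (R.sort (· ≤ ·)) ∅ hx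
  simpa using this

lemma ffdBundle_lexLe {M R B : Finset C} {v : C → ℝ} (hord : ChoreOrdered M v)
    (hR : R ⊆ M) {τ : ℝ} (hB : B ⊆ R) (hcost : bundleCost v B ≤ τ) :
    lexLe v B (ffdBundle v τ R) :=
  greedy_lexLe v (R.sort (· ≤ ·)) (Finset.sortedLT_sort R).pairwise
    (fun x hx => hord.1 x (hR ((Finset.mem_sort _).1 hx)))
    (fun a ha b hb hab =>
      hord.2 a (hR ((Finset.mem_sort _).1 ha)) b (hR ((Finset.mem_sort _).1 hb)) hab)
    τ B (fun x hx => (Finset.mem_sort _).2 (hB hx)) hcost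

lemma ffdRem_eq_sdiff (M : Finset C) (v : C → ℝ) (τ : ℝ) :
    ∀ k, ffdRem M v τ k = M \ (Finset.range k).biUnion (fun j => FFDBundle M v τ j) := by
  intro k
  induction k with
  | zero => simp [ffdRem]
  | succ k ih =>
      have hstep : ffdRem M v τ (k + 1) = ffdRem M v τ k \ FFDBundle M v τ k := rfl
      rw [hstep, ih, Finset.range_add_one, Finset.biUnion_insert]
      ext x
      simp only [Finset.mem_sdiff, Finset.mem_union]
      tauto

lemma ffdRem_subset (M : Finset C) (v : C → ℝ) (τ : ℝ) (k : ℕ) :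
    ffdRem M v τ k ⊆ M := by
  rw [ffdRem_eq_sdiff]
  exact Finset.sdiff_subset

/-- for any `α ≥ 1` and `n ≥ 2`, monotonicity of FFD implies weak
monotonicity of FFD. -/
theorem monotone_implies_weakly_monotone (α : ℝ) (hα : 1 ≤ α) (n : ℕ) (hn : 2 ≤ n)
    (h : MonotoneFFD C α n) : WeaklyMonotoneFFD C α n := by
  intro M v hord hall β hβ
  have hμ0 : 0 ≤ MMS M v n := by
    apply Real.sInf_nonneg
    rintro x ⟨P, hP, hPx⟩
    have h0 : (0:ℝ) ≤ bundleCost v (P ⟨0, by omega⟩) :=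
      bundleCost_nonneg (fun c hc => hord.1 c (hP.1 _ hc))
    exact le_trans h0 (hPx ⟨0, by omega⟩)
  set μ := MMS M v n with hμdef
  set τ' := β * μ with hτ'def
  have hαβ : α * μ ≤ τ' := mul_le_mul_of_nonneg_right hβ hμ0
  set A : Fin n → Finset C := fun k => FFDBundle M v τ' k.val with hAdef
  have hAsub : ∀ k : Fin n, A k ⊆ ffdRem M v τ' k.val := fun k => ffdBundle_subset v τ' _
  have hprior : ∀ k : Fin n, priorUnion A k =
      (Finset.range k.val).biUnion (fun j => FFDBundle M v τ' j) := by
    intro k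
    ext x
    simp only [priorUnion, Finset.mem_biUnion, Finset.mem_filter, Finset.mem_univ, true_and,
      Finset.mem_range]
    constructor
    · rintro ⟨j, hj, hx⟩
      exact ⟨j.val, hj, hx⟩
    · rintro ⟨m, hm, hx⟩
      exact ⟨⟨m, lt_trans hm k.isLt⟩, hm, hx⟩
  have hffv : FirstFitValid M A v (α * μ) := by
    refine ⟨?_, ?_, ?_, ?_⟩
    · intro k
      exact (hAsub k).trans (ffdRem_subset M v τ' k.val)
    · have key : ∀ i j : Fin n, i < j → Disjoint (A i) (A j) := by
        intro i j hij
        rw [Finset.disjoint_left]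
        intro x hxi hxj
        have hxj' : x ∈ ffdRem M v τ' j.val := hAsub j hxj
        rw [ffdRem_eq_sdiff] at hxj'
        exact (Finset.mem_sdiff.1 hxj').2
          (Finset.mem_biUnion.2 ⟨i.val, Finset.mem_range.2 hij, hxi⟩)
      intro i j hij
      rcases lt_or_gt_of_ne hij with h1 | h1
      · exact key i j h1
      · exact (key j i h1).symm
    · exact le_mul_of_one_le_left hμ0 hα
    · rintro k B ⟨hBsub, hBcost, -⟩
      rw [hprior k, ← ffdRem_eq_sdiff] at hBsub
      exact ffdBundle_lexLe hord (ffdRem_subset M v τ' k.val) hBsub (hBcost.trans hαβ)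
  have hcover : Finset.univ.biUnion A = M := h M v hord hall A hffv
  show ffdRem M v τ' n = ∅
  rw [ffdRem_eq_sdiff, Finset.sdiff_eq_empty_iff_subset]
  intro x hx
  rw [← hcover] at hx
  obtain ⟨j, -, hxj⟩ := Finset.mem_biUnion.1 hx
  exact Finset.mem_biUnion.2 ⟨j.val, Finset.mem_range.2 j.isLt, hxj⟩


end
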